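/- Let n ≥ 1 and let c ∈ ℝ^n, and let h = {x ∈ ℝ^n : ∑_{i=1}^n c_i x_i = 1} be the corresponding affine hyperplane avoiding the origin. Then the weight of h satisfies w(h) ≤ 1. -/

import Mathlib

open scoped Classical in
/-- The Clifton–Huang weight of the hyperplane `{x : ∑ i, c i * x i = 1}`:
the sum over nonempty subsets `S ⊆ [n]` with `∑_{i ∈ S} c i = 1` of
`1 / (|S| * binom(n, |S|))`. -/
noncomputable def hyperplaneWeight {n : ℕ} (c : Fin n → ℝ) : ℝ :=
  ∑ S : Finset (Fin n),
    if S.Nonempty ∧ ∑ i ∈ S, c i = 1 then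
      1 / (S.card * (n.choose S.card)) else 0


open Nat Finset
open scoped Classical

namespace CHProof

variable {n : ℕ} (c : Fin n → ℝ)

def psum (l : List (Fin n)) (m : ℕ) : ℝ := ((l.take m).map c).sum

def Good (l : List (Fin n)) : Prop :=
  ∀ m, 0 < m → m < l.length → psum c l m ≠ 1

lemma perm_toFinset {l₁ l₂ : List (Fin n)} (h : l₁.Perm l₂) : l₁.toFinset = l₂.toFinset := by
  ext a; simp [List.mem_toFinset, h.mem_iff]

lemma psum_length (l : List (Fin n)) : psum c l l.length = (l.map c).sum := by
  simp [psum]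

lemma psum_zero (l : List (Fin n)) : psum c l 0 = 0 := by simp [psum]

/-- Cycle lemma: some rotation is good. -/
lemma exists_good_rotate (l : List (Fin n)) (h1 : (l.map c).sum = 1) (hk : 0 < l.length) :
    ∃ j < l.length, Good c (l.rotate j) := by
  classical
  set k := l.length with hkdef
  -- first index attaining max of psum over range k
  have hex : ∃ j, j < k ∧ ∀ i < k, psum c l i ≤ psum c l j := by
    obtain ⟨j, hj, hmax⟩ := Finset.exists_max_image (Finset.range k) (psum c l)
      ⟨0, Finset.mem_range.mpr hk⟩
    exact ⟨j, Finset.mem_range.mp hj, fun i hi => hmax i (Finset.mem_range.mpr hi)⟩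
  set j := Nat.find hex with hjdef
  obtain ⟨hjk, hmax⟩ := Nat.find_spec hex
  have hstrict : ∀ i < j, psum c l i < psum c l j := by
    intro i hi
    have h2 := Nat.find_min hex hi
    push_neg at h2
    obtain ⟨i', hi', hgt⟩ := h2 (lt_trans hi hjk)
    exact lt_of_lt_of_le hgt (hmax i' hi')
  refine ⟨j, hjk, ?_⟩
  intro m hm hmlen
  rw [List.length_rotate] at hmlen
  have hrot : l.rotate j = l.drop j ++ l.take j := List.rotate_eq_drop_append_take hjk.le
  have hlen_drop : (l.drop j).length = k - j := by simp [hkdef]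
  by_cases hcase : m ≤ k - j
  · -- prefix within the dropped part
    have htake : (l.rotate j).take m = (l.drop j).take m := by
      rw [hrot, List.take_append_of_le_length (by omega)]
    have hsum : psum c (l.rotate j) m = psum c l (j + m) - psum c l j := by
      have : l.take (j + m) = l.take j ++ (l.drop j).take m := List.take_add ..
      have h2 : psum c l (j + m) = psum c l j + ((((l.drop j).take m).map c).sum) := by
        rw [psum, this, List.map_append, List.sum_append]; rfl
      rw [psum, htake, h2]; ring
    rw [hsum]
    rcases lt_or_eq_of_le hcase with hlt | heq
    · -- j + m < k
      have := hmax (j + m) (by omega)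
      intro habs; linarith
    · -- j + m = k : value is 1 - psum j ; j ≥ 1 since m < k
      have hjm : j + m = k := by omega
      have hj1 : 0 < j := by omega
      have h0 : (0:ℝ) < psum c l j := by
        have := hstrict 0 hj1
        rwa [psum_zero] at this
      have : psum c l (j + m) = 1 := by rw [hjm, hkdef, psum_length, h1]
      rw [this]
      intro habs; linarith
  · -- prefix wraps around
    push_neg at hcase
    set u := m - (k - j) with hu
    have hum : m = (l.drop j).length + u := by omega
    have htake : (l.rotate j).take m = l.drop j ++ (l.take j).take u := by
      rw [hrot, hum, List.take_length_add_append]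
    have htt : (l.take j).take u = l.take u := by
      rw [List.take_take, min_eq_left (by omega)]
    have hdropsum : ((l.drop j).map c).sum = 1 - psum c l j := by
      have : (l.take j).map c ++ (l.drop j).map c = l.map c := by
        rw [← List.map_append, List.take_append_drop]
      have h2 := congrArg List.sum this
      rw [List.sum_append, h1] at h2
      have : psum c l j = ((l.take j).map c).sum := rfl
      linarith [h2]
    have hsum : psum c (l.rotate j) m = (1 - psum c l j) + psum c l u := by
      rw [psum, htake, htt, List.map_append, List.sum_append, hdropsum]; rfl
    rw [hsum]
    have hult : u < j := by omega
    have := hstrict u hult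
    intro habs; linarith

/-- orderings of a finset, as a finset of lists -/
def ords (S : Finset (Fin n)) : Finset (List (Fin n)) :=
  (S.sort (· ≤ ·)).permutations.toFinset

lemma mem_ords {S : Finset (Fin n)} {l : List (Fin n)} :
    l ∈ ords S ↔ l.Perm (S.sort (· ≤ ·)) := by
  simp [ords, List.mem_toFinset, List.mem_permutations]

lemma card_ords (S : Finset (Fin n)) : (ords S).card = S.card ! := by
  rw [ords, List.toFinset_card_of_nodup (List.nodup_permutations _ (S.sort_nodup (· ≤ ·))),
    List.length_permutations, Finset.length_sort]

lemma length_of_mem_ords {S : Finset (Fin n)} {l : List (Fin n)} (h : l ∈ ords S) :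
    l.length = S.card := by
  rw [(mem_ords.mp h).length_eq, Finset.length_sort]

lemma sum_sort (S : Finset (Fin n)) : ((S.sort (· ≤ ·)).map c).sum = ∑ i ∈ S, c i := by
  rw [Finset.sum_eq_multiset_sum]
  have h : ((S.sort (· ≤ ·) : List (Fin n)) : Multiset (Fin n)) = S.val := S.sort_eq (· ≤ ·)
  rw [← h, ← Multiset.sum_coe, ← Multiset.map_coe]

lemma sum_of_mem_ords {S : Finset (Fin n)} {l : List (Fin n)} (h : l ∈ ords S) :
    (l.map c).sum = ∑ i ∈ S, c i := by
  rw [((mem_ords.mp h).map c).sum_eq, sum_sort]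

lemma toFinset_of_mem_ords {S : Finset (Fin n)} {l : List (Fin n)} (h : l ∈ ords S) :
    l.toFinset = S := by
  rw [perm_toFinset (mem_ords.mp h), Finset.sort_toFinset]

noncomputable def rho (l : List (Fin n)) : List (Fin n) :=
  if h : ∃ j < l.length, Good c (l.rotate j) then l.rotate (Classical.choose h) else l

noncomputable def goodOrds (S : Finset (Fin n)) : Finset (List (Fin n)) :=
  (ords S).filter (fun l => Good c l)

lemma card_goodOrds {S : Finset (Fin n)} (hS : S.Nonempty) (hsum : ∑ i ∈ S, c i = 1) :
    (S.card - 1)! ≤ (goodOrds c S).card := by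
  set k := S.card with hk
  have hk1 : 1 ≤ k := Finset.card_pos.mpr hS
  have hhyp : ∀ l ∈ ords S, ∃ j < l.length, Good c (l.rotate j) := fun l hl =>
    exists_good_rotate c l (by rw [sum_of_mem_ords c hl, hsum])
      (by rw [length_of_mem_ords hl]; omega)
  have hmaps : ∀ l ∈ ords S, rho c l ∈ goodOrds c S := by
    intro l hl
    have h := hhyp l hl
    rw [rho, dif_pos h]
    obtain ⟨hj, hgood⟩ := Classical.choose_spec h
    exact Finset.mem_filter.mpr ⟨mem_ords.mpr (((l.rotate_perm _).trans (mem_ords.mp hl))), hgood⟩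
  have hfiber : ∀ g ∈ (ords S).image (rho c),
      ((ords S).filter (fun l => rho c l = g)).card ≤ k := by
    intro g _
    have hsub : (ords S).filter (fun l => rho c l = g) ⊆
        (Finset.range k).image (fun i => g.rotate i) := by
      intro l hl
      obtain ⟨hl, hrl⟩ := Finset.mem_filter.mp hl
      have h := hhyp l hl
      rw [rho, dif_pos h] at hrl
      obtain ⟨hj, _⟩ := Classical.choose_spec h
      set j := Classical.choose h
      have hlen : l.length = k := length_of_mem_ords hl
      have hglen : g.length = k := by rw [← hrl, List.length_rotate, hlen]
      have heq : g.rotate ((k - j) % k) = l := by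
        rw [← hglen, List.rotate_mod, hglen, ← hrl, List.rotate_rotate]
        have h2 : j + (k - j) = k := by omega
        rw [h2, ← hlen, List.rotate_length]
      exact Finset.mem_image.mpr ⟨(k - j) % k, Finset.mem_range.mpr (Nat.mod_lt _ (by omega)), heq⟩
    calc ((ords S).filter (fun l => rho c l = g)).card
        ≤ ((Finset.range k).image (fun i => g.rotate i)).card := Finset.card_le_card hsub
      _ ≤ k := le_trans Finset.card_image_le (by simp)
  have hmain : (ords S).card ≤ k * ((ords S).image (rho c)).card :=
    Finset.card_le_mul_card_image _ _ hfiber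
  have himg : (ords S).image (rho c) ⊆ goodOrds c S := by
    intro g hg
    obtain ⟨l, hl, rfl⟩ := Finset.mem_image.mp hg
    exact hmaps l hl
  have hfin : k ! ≤ k * (goodOrds c S).card := by
    calc k ! = (ords S).card := (card_ords S).symm
      _ ≤ k * ((ords S).image (rho c)).card := hmain
      _ ≤ k * (goodOrds c S).card := Nat.mul_le_mul_left _ (Finset.card_le_card himg)
  have hsp : k.pred + 1 = k := Nat.succ_pred_eq_of_pos (show 0 < k by omega)
  have hkfac : k ! = k * (k-1)! := by
    calc k ! = (k.pred + 1)! := by rw [hsp]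
      _ = (k.pred + 1) * k.pred ! := Nat.factorial_succ _
      _ = k * (k-1)! := by rw [hsp]; rfl
  rw [hkfac] at hfin
  exact Nat.le_of_mul_le_mul_left hfin (by omega)


noncomputable def hfam : Finset (Finset (Fin n)) :=
  Finset.univ.filter (fun S => S.Nonempty ∧ ∑ i ∈ S, c i = 1)

noncomputable def F (S : Finset (Fin n)) : Finset (List (Fin n)) :=
  ((goodOrds c S) ×ˢ ords Sᶜ).image (fun p => p.1 ++ p.2)

lemma append_mem_ords_univ {S : Finset (Fin n)} {l₁ l₂ : List (Fin n)}
    (h1 : l₁ ∈ ords S) (h2 : l₂ ∈ ords Sᶜ) :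
    (l₁ ++ l₂) ∈ ords (Finset.univ : Finset (Fin n)) := by
  rw [mem_ords]
  rw [← Multiset.coe_eq_coe]
  have e1 : (↑l₁ : Multiset (Fin n)) = S.val := by
    rw [Multiset.coe_eq_coe.mpr (mem_ords.mp h1), Finset.sort_eq]
  have e2 : (↑l₂ : Multiset (Fin n)) = Sᶜ.val := by
    rw [Multiset.coe_eq_coe.mpr (mem_ords.mp h2), Finset.sort_eq]
  have : ((l₁ ++ l₂ : List (Fin n)) : Multiset (Fin n)) = S.val + Sᶜ.val := by
    rw [← e1, ← e2]; rfl
  rw [this, Finset.sort_eq]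
  have hle : S.val ≤ (Finset.univ : Finset (Fin n)).val :=
    Finset.val_le_iff.mpr (Finset.subset_univ S)
  rw [Finset.compl_eq_univ_sdiff, Finset.sdiff_val, add_tsub_cancel_of_le hle]

lemma mem_F_props {S : Finset (Fin n)} (hS : S ∈ hfam c) {m : List (Fin n)} (hm : m ∈ F c S) :
    m ∈ ords (Finset.univ : Finset (Fin n)) ∧ (m.take S.card).toFinset = S ∧
    (∀ j, 0 < j → j < S.card → psum c m j ≠ 1) ∧ psum c m S.card = 1 := by
  obtain ⟨hSne, hSsum⟩ := (Finset.mem_filter.mp hS).2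
  obtain ⟨⟨l₁, l₂⟩, hp, rfl⟩ := Finset.mem_image.mp hm
  obtain ⟨h1, h2⟩ := Finset.mem_product.mp hp
  dsimp only at h1 h2
  obtain ⟨h1o, h1g⟩ := Finset.mem_filter.mp h1
  have hlen : l₁.length = S.card := length_of_mem_ords h1o
  have htake : (l₁ ++ l₂).take S.card = l₁ := by rw [← hlen, List.take_left]
  refine ⟨append_mem_ords_univ h1o h2, ?_, ?_, ?_⟩
  · rw [htake, toFinset_of_mem_ords h1o]
  · intro j hj0 hjS
    have : (l₁ ++ l₂).take j = l₁.take j := List.take_append_of_le_length (by omega)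
    rw [psum, this]
    exact h1g j hj0 (by omega)
  · rw [psum, htake, sum_of_mem_ords c h1o, hSsum]

lemma card_F {S : Finset (Fin n)} : (F c S).card = (goodOrds c S).card * (Sᶜ.card)! := by
  rw [F, Finset.card_image_of_injOn, Finset.card_product, card_ords]
  intro p hp q hq heq
  obtain ⟨hp1, _⟩ := Finset.mem_product.mp hp
  obtain ⟨hq1, _⟩ := Finset.mem_product.mp hq
  have hlp : p.1.length = S.card := length_of_mem_ords (Finset.mem_filter.mp hp1).1
  have hlq : q.1.length = S.card := length_of_mem_ords (Finset.mem_filter.mp hq1).1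
  obtain ⟨e1, e2⟩ := List.append_inj heq (hlp.trans hlq.symm)
  exact Prod.ext e1 e2

lemma F_disjoint {S T : Finset (Fin n)} (hS : S ∈ hfam c) (hT : T ∈ hfam c) (hne : S ≠ T) :
    Disjoint (F c S) (F c T) := by
  rw [Finset.disjoint_left]
  intro m hmS hmT
  obtain ⟨-, hSrec, hSgood, hShit⟩ := mem_F_props c hS hmS
  obtain ⟨-, hTrec, hTgood, hThit⟩ := mem_F_props c hT hmT
  have hScard : 0 < S.card := Finset.card_pos.mpr (Finset.mem_filter.mp hS).2.1
  have hTcard : 0 < T.card := Finset.card_pos.mpr (Finset.mem_filter.mp hT).2.1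
  have hcard : S.card = T.card := by
    by_contra hc
    rcases Nat.lt_or_ge S.card T.card with h | h
    · exact hTgood S.card hScard h hShit
    · exact hSgood T.card hTcard (by omega) hThit
  exact hne (hSrec ▸ (hcard ▸ hTrec) ▸ rfl)

lemma count_bound : ∑ S ∈ hfam c, (goodOrds c S).card * (Sᶜ.card)! ≤ n ! := by
  calc ∑ S ∈ hfam c, (goodOrds c S).card * (Sᶜ.card)!
      = ∑ S ∈ hfam c, (F c S).card := by
        exact Finset.sum_congr rfl (fun S _ => (card_F c).symm)
    _ = ((hfam c).biUnion (F c)).card := by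
        rw [Finset.card_biUnion]
        intro S hS T hT hne
        exact F_disjoint c hS hT hne
    _ ≤ (ords (Finset.univ : Finset (Fin n))).card := by
        apply Finset.card_le_card
        intro m hm
        obtain ⟨S, hS, hmS⟩ := Finset.mem_biUnion.mp hm
        exact (mem_F_props c hS hmS).1
    _ = n ! := by rw [card_ords, Finset.card_univ, Fintype.card_fin]


theorem main_bound (hn : 1 ≤ n) :
    (∑ S : Finset (Fin n),
      if S.Nonempty ∧ ∑ i ∈ S, c i = 1 then
        (1:ℝ) / (S.card * (n.choose S.card)) else 0) ≤ 1 := by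
  have hrw : (∑ S : Finset (Fin n),
      if S.Nonempty ∧ ∑ i ∈ S, c i = 1 then
        (1:ℝ) / (S.card * (n.choose S.card)) else 0)
      = ∑ S ∈ hfam c, (1:ℝ) / (S.card * (n.choose S.card)) := by
    rw [hfam, Finset.sum_filter]
  rw [hrw]
  have hfacpos : (0:ℝ) < (n ! : ℝ) := by exact_mod_cast Nat.factorial_pos n
  have step1 : ∀ S ∈ hfam c,
      (1:ℝ) / (S.card * (n.choose S.card)) ≤ ((goodOrds c S).card * (Sᶜ.card)! : ℕ) / (n ! : ℝ) := by
    intro S hS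
    obtain ⟨hSne, hSsum⟩ := (Finset.mem_filter.mp hS).2
    set k := S.card with hk
    have hk1 : 1 ≤ k := Finset.card_pos.mpr hSne
    have hkn : k ≤ n := by
      have := Finset.card_le_card (Finset.subset_univ S)
      simpa using this
    have hcompl : Sᶜ.card = n - k := by
      rw [Finset.card_compl, Fintype.card_fin]
    have hnat : k * n.choose k * ((k-1)! * (n-k)!) = n ! := by
      have hsp : k - 1 + 1 = k := by omega
      have h1 : k * (k-1)! = k ! := by
        calc k * (k-1)! = (k-1+1) * (k-1)! := by rw [hsp]
          _ = (k-1+1)! := (Nat.factorial_succ _).symm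
          _ = k ! := by rw [hsp]
      calc k * n.choose k * ((k-1)! * (n-k)!)
          = n.choose k * (k * (k-1)!) * (n-k)! := by ring
        _ = n.choose k * k ! * (n-k)! := by rw [h1]
        _ = n ! := Nat.choose_mul_factorial_mul_factorial hkn
    have hchoosepos : 0 < n.choose k := Nat.choose_pos hkn
    have hdenpos : (0:ℝ) < (k : ℝ) * (n.choose k : ℝ) := by
      have : 0 < k * n.choose k := Nat.mul_pos (by omega) hchoosepos
      exact_mod_cast this
    have heq : (1:ℝ) / (k * (n.choose k)) = (((k-1)! * (n-k)! : ℕ) : ℝ) / (n ! : ℝ) := by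
      rw [div_eq_div_iff hdenpos.ne' hfacpos.ne']
      have := hnat
      push_cast [← hnat]
      ring
    rw [heq, hcompl]
    gcongr
    exact_mod_cast card_goodOrds c hSne hSsum
  calc ∑ S ∈ hfam c, (1:ℝ) / (S.card * (n.choose S.card))
      ≤ ∑ S ∈ hfam c, (((goodOrds c S).card * (Sᶜ.card)! : ℕ) : ℝ) / (n ! : ℝ) :=
        Finset.sum_le_sum step1
    _ = ((∑ S ∈ hfam c, (goodOrds c S).card * (Sᶜ.card)! : ℕ) : ℝ) / (n ! : ℝ) := by
        rw [← Finset.sum_div]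
        norm_cast
    _ ≤ (n ! : ℝ) / (n ! : ℝ) := by
        gcongr
        exact_mod_cast count_bound c
    _ = 1 := div_self (ne_of_gt hfacpos)

end CHProof

theorem weight_le_one (n : ℕ) (hn : 1 ≤ n) (c : Fin n → ℝ) :
    hyperplaneWeight c ≤ 1 := by
  have h := CHProof.main_bound c hn
  rw [hyperplaneWeight]
  convert h using 2
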